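/- Let S be a commutative semiring with 0 and 1, n ≥ 1, Σ an alphabet, u, v ∈ Σ*, π a path in Γ_{n,Σ}, and m a formal monomial in S[X_{n,Σ}]. Then there is a bijection between: (a) the set of occurrences of π in the concatenation uv whose monomial equals m, and (b) the set of quadruples (α, β, p, q) where π = αβ is a factorization of π into a path α followed by a path β, p is an occurrence of α in u, q is an occurrence of β in v, and the product of the monomials of p and q equals m as a formal monomial. -/

import Mathlib

attribute [local instance] Classical.propDecidable

open scoped BigOperators

/-- The submonoid of upper triangular `n × n` matrices over `S`. -/
def UT (n : ℕ) (S : Type*) [CommSemiring S] : Submonoid (Matrix (Fin n) (Fin n) S) where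
  carrier := {A | ∀ i j : Fin n, j < i → A i j = 0}
  one_mem' := fun i j hij => Matrix.one_apply_ne (ne_of_gt hij)
  mul_mem' := by
    intro a b ha hb i j hij
    rw [Matrix.mul_apply]
    apply Finset.sum_eq_zero
    intro k _
    rcases lt_or_ge k i with h | h
    · rw [ha i k h, zero_mul]
    · rw [hb k j (lt_of_lt_of_le hij h), mul_zero]

/-- A path in the loop-free quiver `Γ_{n,Σ}`: a start vertex together with a list of
labelled edges, the visited vertices being strictly increasing. -/
structure QPath (n : ℕ) (A : Type*) where
  start : Fin n
  steps : List (A × Fin n)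
  chain : List.Chain' (· < ·) (start :: steps.map Prod.snd)

namespace QPath

variable {n : ℕ} {A : Type*}

/-- The `j`-th vertex visited by the path. -/
def vtx (π : QPath n A) (j : ℕ) : Fin n :=
  (π.start :: π.steps.map Prod.snd).getD j π.start

/-- The label of a path. -/
def label (π : QPath n A) : List A := π.steps.map Prod.fst

/-- The final vertex of a path. -/
def last (π : QPath n A) : Fin n := π.vtx π.steps.length

end QPath

/-- `p` is an occurrence of the path `π` in the word `w`. -/
def IsOcc {n : ℕ} {A : Type*} (π : QPath n A) (w : List A)
    (p : Fin π.steps.length → Fin w.length) : Prop :=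
  (∀ j k, j < k → p j < p k) ∧ ∀ j, w.get (p j) = (π.steps.get j).1

/-- The monomial corresponding to an occurrence. -/
noncomputable def occMonomial (S : Type*) [CommSemiring S] {n : ℕ} {A : Type*}
    (π : QPath n A) (w : List A) (p : Fin π.steps.length → Fin w.length) :
    MvPolynomial (A × Fin n) S :=
  ∏ i : Fin w.length,
    if ∃ j, p j = i then 1
    else MvPolynomial.X (w.get i, π.vtx (Finset.univ.filter (fun j => p j < i)).card)

/-- The formal polynomial `f_π^w`. -/
noncomputable def fPoly (S : Type*) [CommSemiring S] {n : ℕ} {A : Type*}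
    (π : QPath n A) (w : List A) : MvPolynomial (A × Fin n) S :=
  ∑ p ∈ Finset.univ.filter (IsOcc π w), occMonomial S π w p

namespace QPath
variable {n : ℕ} {A : Type*}

/-- The initial segment of a path consisting of its first `j` edges. -/
def take (π : QPath n A) (j : ℕ) : QPath n A :=
  ⟨π.start, π.steps.take j, by
    have h : (π.start :: (π.steps.take j).map Prod.snd) =
        (π.start :: π.steps.map Prod.snd).take (j + 1) := by
      simp [List.map_take]
    rw [h]
    exact π.chain.take _⟩

/-- The final segment of a path obtained by removing its first `j` edges. -/
def drop (π : QPath n A) (j : ℕ) : QPath n A :=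
  ⟨π.vtx j, π.steps.drop j, by
    rcases le_or_gt j π.steps.length with hj | hj
    · have hlen : j < (π.start :: π.steps.map Prod.snd).length := by
        simp; omega
      have h : π.vtx j :: (π.steps.drop j).map Prod.snd =
          (π.start :: π.steps.map Prod.snd).drop j := by
        rw [List.map_drop, List.drop_eq_getElem_cons hlen, List.drop_succ_cons]
        congr 1
        exact List.getD_eq_getElem _ _ hlen
      rw [h]
      exact π.chain.drop _
    · have h : π.steps.drop j = [] := List.drop_eq_nil_of_le (by omega)
      rw [h]
      exact List.isChain_singleton _⟩

end QPath

/-- `π = αβ`: the pair `(α, β)` is a factorisation of the path `π`. -/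
def IsFactorization {n : ℕ} {A : Type*} (π α β : QPath n A) : Prop :=
  α.start = π.start ∧ β.start = α.last ∧ α.steps ++ β.steps = π.steps

section Helpers
variable {n : ℕ} {A : Type*}

theorem qpath_ext {p q : QPath n A} (h1 : p.start = q.start) (h2 : p.steps = q.steps) :
    p = q := by
  cases p; cases q; simp_all

theorem vtx_take (π : QPath n A) {j k : ℕ} (hk : k ≤ j) (hj : k ≤ π.steps.length) :
    (π.take j).vtx k = π.vtx k := by
  unfold QPath.vtx QPath.take
  simp only [List.map_take]
  cases k with
  | zero => rfl
  | succ k =>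
    simp only [List.getD_eq_getElem?_getD, List.getElem?_cons_succ, List.getElem?_take]
    rw [if_pos (by omega)]

theorem vtx_drop (π : QPath n A) {j k : ℕ} (hj : j ≤ π.steps.length)
    (hk : k ≤ π.steps.length - j) :
    (π.drop j).vtx k = π.vtx (j + k) := by
  unfold QPath.vtx QPath.drop
  cases k with
  | zero => rfl
  | succ k =>
    rw [show j + (k + 1) = (j + k) + 1 by omega]
    simp only [List.getD_eq_getElem?_getD, List.getElem?_cons_succ, List.map_drop,
      List.getElem?_drop]
    rw [List.getElem?_eq_getElem (by simp at hj hk ⊢; omega)]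
    simp

theorem card_filter_lt_fin (L j : ℕ) (hj : j ≤ L) :
    (Finset.univ.filter (fun i : Fin L => (i : ℕ) < j)).card = j := by
  classical
  have h : Finset.univ.filter (fun i : Fin L => (i : ℕ) < j) =
      (Finset.range j).attachFin (fun m hm => by simp at hm; omega) := by
    ext i; simp [Finset.mem_attachFin]
  rw [h, Finset.card_attachFin, Finset.card_range]

end Helpers
section Main
variable {n : ℕ} {A : Type*}

theorem mem_iff_lt_card {L : ℕ} (P : Fin L → Prop)
    (hdc : ∀ i k : Fin L, i ≤ k → P k → P i) (i : Fin L) :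
    P i ↔ (i : ℕ) < (Finset.univ.filter P).card := by
  classical
  constructor
  · intro hi
    have h1 : ((Finset.range ((i : ℕ) + 1)).attachFin (fun m hm => by
        simp at hm; omega)) ⊆ Finset.univ.filter P := by
      intro a ha
      simp [Finset.mem_attachFin] at ha ⊢
      exact hdc a i (by rw [Fin.le_def]; omega) hi
    have h2 := Finset.card_le_card h1
    rw [Finset.card_attachFin, Finset.card_range] at h2
    omega
  · intro hi
    by_contra hP
    have h1 : Finset.univ.filter P ⊆
        Finset.univ.filter (fun k : Fin L => (k : ℕ) < (i : ℕ)) := by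
      intro a ha
      simp at ha ⊢
      by_contra hlt
      exact hP (hdc i a (by rw [Fin.le_def]; omega) ha)
    have h2 := Finset.card_le_card h1
    rw [card_filter_lt_fin L i (le_of_lt i.isLt)] at h2
    omega

variable (u v : List A) (π : QPath n A)

theorem len_take (j : ℕ) : (π.take j).steps.length = min j π.steps.length := by
  simp [QPath.take]

theorem len_drop (j : ℕ) : (π.drop j).steps.length = π.steps.length - j := by
  simp [QPath.drop]

noncomputable def splitIdx (p : Fin π.steps.length → Fin (u ++ v).length) : ℕ :=
  (Finset.univ.filter (fun i => ((p i : ℕ)) < u.length)).card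

theorem splitIdx_le (p : Fin π.steps.length → Fin (u ++ v).length) :
    splitIdx u v π p ≤ π.steps.length := by
  classical
  exact (Finset.card_filter_le _ _).trans (by simp)

theorem splitIdx_key (p : Fin π.steps.length → Fin (u ++ v).length)
    (hocc : IsOcc π (u ++ v) p) (i : Fin π.steps.length) :
    ((p i : ℕ) < u.length) ↔ (i : ℕ) < splitIdx u v π p := by
  unfold splitIdx
  have H := mem_iff_lt_card (fun i : Fin π.steps.length => ((p i : ℕ)) < u.length) ?_ i
  · rwa [Finset.filter_congr_decidable] at H
  intro a b hab hb
  rcases eq_or_lt_of_le hab with h | h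
  · rwa [h]
  · have := hocc.1 a b h
    rw [Fin.lt_def] at this
    omega

end Main
section Defs
variable {n : ℕ} {A : Type*} (u v : List A) (π : QPath n A)

noncomputable def pL (p : Fin π.steps.length → Fin (u ++ v).length)
    (hocc : IsOcc π (u ++ v) p) :
    Fin (π.take (splitIdx u v π p)).steps.length → Fin u.length := fun i =>
  have hi : (i : ℕ) < π.steps.length := by
    have := i.isLt; have h2 := len_take π (splitIdx u v π p); omega
  have hj : (i : ℕ) < splitIdx u v π p := by
    have := i.isLt; have h2 := len_take π (splitIdx u v π p); omega
  ⟨(p ⟨(i : ℕ), hi⟩).val, (splitIdx_key u v π p hocc ⟨(i : ℕ), hi⟩).2 hj⟩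

noncomputable def pR (p : Fin π.steps.length → Fin (u ++ v).length)
    (hocc : IsOcc π (u ++ v) p) :
    Fin (π.drop (splitIdx u v π p)).steps.length → Fin v.length := fun i =>
  have hle := splitIdx_le u v π p
  have hi : splitIdx u v π p + (i : ℕ) < π.steps.length := by
    have := i.isLt; have h2 := len_drop π (splitIdx u v π p); omega
  have h1 : ¬ ((p ⟨_, hi⟩ : ℕ) < u.length) := by
    rw [splitIdx_key u v π p hocc]; simp
  have h2 : (p ⟨_, hi⟩ : ℕ) < u.length + v.length := by
    have := (p ⟨_, hi⟩).isLt; simpa using this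
  ⟨(p ⟨_, hi⟩).val - u.length, by omega⟩

noncomputable def pComb (α β : QPath n A) (hfac : IsFactorization π α β)
    (p : Fin α.steps.length → Fin u.length) (q : Fin β.steps.length → Fin v.length) :
    Fin π.steps.length → Fin (u ++ v).length := fun i =>
  if h : (i : ℕ) < α.steps.length then
    ⟨(p ⟨(i : ℕ), h⟩ : ℕ), by have := (p ⟨(i : ℕ), h⟩).isLt; simp only [List.length_append]; omega⟩
  else
    have hL : α.steps.length + β.steps.length = π.steps.length := by
      rw [← hfac.2.2]; simp
    ⟨u.length + (q ⟨(i : ℕ) - α.steps.length, by have := i.isLt; omega⟩ : ℕ), by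
      have := (q ⟨(i : ℕ) - α.steps.length, by have := i.isLt; omega⟩).isLt
      simp only [List.length_append]; omega⟩

theorem steps_len_eq (α β : QPath n A) (hfac : IsFactorization π α β) :
    α.steps.length + β.steps.length = π.steps.length := by
  rw [← hfac.2.2]; simp

theorem pComb_val_lt (α β : QPath n A) (hfac : IsFactorization π α β)
    (p : Fin α.steps.length → Fin u.length) (q : Fin β.steps.length → Fin v.length)
    (i : Fin π.steps.length) (h : (i : ℕ) < α.steps.length) :
    (pComb u v π α β hfac p q i : ℕ) = (p ⟨(i : ℕ), h⟩ : ℕ) := by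
  simp only [pComb]
  rw [dif_pos h]

theorem pComb_val_ge (α β : QPath n A) (hfac : IsFactorization π α β)
    (p : Fin α.steps.length → Fin u.length) (q : Fin β.steps.length → Fin v.length)
    (i : Fin π.steps.length) (h : ¬ (i : ℕ) < α.steps.length)
    (h2 : (i : ℕ) - α.steps.length < β.steps.length) :
    (pComb u v π α β hfac p q i : ℕ) = u.length + (q ⟨(i : ℕ) - α.steps.length, h2⟩ : ℕ) := by
  simp only [pComb]
  rw [dif_neg h]

end Defs
section Fact
variable {n : ℕ} {A : Type*} (u v : List A) (π : QPath n A)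

theorem fact_take_drop (j : ℕ) (hj : j ≤ π.steps.length) :
    IsFactorization π (π.take j) (π.drop j) := by
  refine ⟨rfl, ?_, List.take_append_drop j π.steps⟩
  show π.vtx j = (π.take j).last
  unfold QPath.last
  have hlen : (π.take j).steps.length = j := by rw [len_take]; omega
  rw [hlen, vtx_take π le_rfl hj]

theorem fact_eq_take (α β : QPath n A) (hfac : IsFactorization π α β) :
    α = π.take α.steps.length ∧ β = π.drop α.steps.length := by
  obtain ⟨h1, h2, h3⟩ := hfac
  have hj : α.steps.length ≤ π.steps.length := by rw [← h3]; simp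
  have hsteps : α.steps = π.steps.take α.steps.length := by
    rw [← h3]; simp
  have hsteps' : β.steps = π.steps.drop α.steps.length := by
    rw [← h3]; simp
  have hA : α = π.take α.steps.length := qpath_ext h1 hsteps
  refine ⟨hA, qpath_ext ?_ hsteps'⟩
  show β.start = π.vtx α.steps.length
  rw [h2]
  unfold QPath.last
  have hlen : (π.take α.steps.length).steps.length = α.steps.length := by
    rw [len_take]; omega
  conv_lhs => rw [hA]
  rw [hlen, vtx_take π le_rfl hj]

theorem pComb_pL_pR (p : Fin π.steps.length → Fin (u ++ v).length)
    (hocc : IsOcc π (u ++ v) p) (hfac : IsFactorization π (π.take (splitIdx u v π p))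
      (π.drop (splitIdx u v π p))) :
    pComb u v π (π.take (splitIdx u v π p)) (π.drop (splitIdx u v π p)) hfac
      (pL u v π p hocc) (pR u v π p hocc) = p := by
  have hle := splitIdx_le u v π p
  have hlt := len_take π (splitIdx u v π p)
  have hld := len_drop π (splitIdx u v π p)
  funext i
  apply Fin.ext
  by_cases h : (i : ℕ) < (π.take (splitIdx u v π p)).steps.length
  · rw [pComb_val_lt u v π _ _ hfac _ _ i h]
    rfl
  · have h2 : (i : ℕ) - (π.take (splitIdx u v π p)).steps.length <
        (π.drop (splitIdx u v π p)).steps.length := by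
      have := i.isLt; omega
    rw [pComb_val_ge u v π _ _ hfac _ _ i h h2]
    show u.length + ((p ⟨splitIdx u v π p + ((i : ℕ) - (π.take (splitIdx u v π p)).steps.length), _⟩).val - u.length) = _
    have hidx : (⟨splitIdx u v π p + ((i : ℕ) - (π.take (splitIdx u v π p)).steps.length), by have := i.isLt; omega⟩ : Fin π.steps.length) = i := by
      apply Fin.ext; simp; omega
    rw [hidx]
    have hge : ¬ ((p i : ℕ) < u.length) := by
      rw [splitIdx_key u v π p hocc]; omega
    omega

end Fact
section Occ
variable {n : ℕ} {A : Type*} (u v : List A) (π : QPath n A)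

theorem getElem_idx_congr {B : Type*} {l : List B} {a b : ℕ} (h : a = b) (ha : a < l.length) :
    l[a]'ha = l[b]'(h ▸ ha) := by subst h; rfl

theorem getElem_eq_of_getElem? {B : Type*} {l l' : List B} {i j : ℕ} (h : l[i]? = l'[j]?)
    (hi : i < l.length) (hj : j < l'.length) : l[i]'hi = l'[j]'hj := by
  rw [List.getElem?_eq_getElem hi, List.getElem?_eq_getElem hj] at h
  exact Option.some.inj h

theorem steps_take_get (j : ℕ) (i : ℕ) (h1 : i < (π.take j).steps.length)
    (h2 : i < π.steps.length) : (π.take j).steps[i]'h1 = π.steps[i]'h2 :=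
  List.getElem_take

theorem steps_drop_get (j : ℕ) (i : ℕ) (h1 : i < (π.drop j).steps.length)
    (h2 : j + i < π.steps.length) : (π.drop j).steps[i]'h1 = π.steps[j + i]'h2 :=
  List.getElem_drop

theorem steps_append_left (α β : QPath n A) (hfac : IsFactorization π α β) (i : ℕ)
    (h1 : i < π.steps.length) (h2 : i < α.steps.length) :
    π.steps[i]'h1 = α.steps[i]'h2 :=
  getElem_eq_of_getElem? (by rw [← hfac.2.2, List.getElem?_append_left h2]) h1 h2

theorem steps_append_right (α β : QPath n A) (hfac : IsFactorization π α β) (i : ℕ)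
    (h1 : i < π.steps.length) (h2 : ¬ i < α.steps.length)
    (h3 : i - α.steps.length < β.steps.length) :
    π.steps[i]'h1 = β.steps[i - α.steps.length]'h3 :=
  getElem_eq_of_getElem? (by rw [← hfac.2.2, List.getElem?_append_right (by omega)]) h1 h3

theorem isOcc_pL (p : Fin π.steps.length → Fin (u ++ v).length) (hocc : IsOcc π (u ++ v) p) :
    IsOcc (π.take (splitIdx u v π p)) u (pL u v π p hocc) := by
  have hle := splitIdx_le u v π p
  have hlt := len_take π (splitIdx u v π p)
  constructor
  · intro a b hab
    have h := hocc.1 ⟨(a : ℕ), by have := a.isLt; omega⟩ ⟨(b : ℕ), by have := b.isLt; omega⟩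
      (by rw [Fin.lt_def]; exact hab)
    rw [Fin.lt_def] at h ⊢
    exact h
  · intro i
    have hi : (i : ℕ) < π.steps.length := by have := i.isLt; omega
    have hj : (i : ℕ) < splitIdx u v π p := by have := i.isLt; omega
    have hkey : (p ⟨(i : ℕ), hi⟩ : ℕ) < u.length :=
      (splitIdx_key u v π p hocc ⟨(i : ℕ), hi⟩).2 hj
    have h2 := hocc.2 ⟨(i : ℕ), hi⟩
    simp only [List.get_eq_getElem] at h2 ⊢
    rw [List.getElem_append_left hkey] at h2
    rw [steps_take_get π _ _ i.isLt hi]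
    exact h2

theorem isOcc_pR (p : Fin π.steps.length → Fin (u ++ v).length) (hocc : IsOcc π (u ++ v) p) :
    IsOcc (π.drop (splitIdx u v π p)) v (pR u v π p hocc) := by
  have hle := splitIdx_le u v π p
  have hld := len_drop π (splitIdx u v π p)
  constructor
  · intro a b hab
    rw [Fin.lt_def] at hab ⊢
    have h := hocc.1 ⟨splitIdx u v π p + (a : ℕ), by have := a.isLt; omega⟩
      ⟨splitIdx u v π p + (b : ℕ), by have := b.isLt; omega⟩
      (by rw [Fin.lt_def]; simp; omega)
    rw [Fin.lt_def] at h
    have hga : ¬ ((p ⟨splitIdx u v π p + (a : ℕ), by have := a.isLt; omega⟩ : ℕ) < u.length) := by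
      rw [splitIdx_key u v π p hocc]; simp
    show (p ⟨splitIdx u v π p + (a : ℕ), _⟩ : ℕ) - u.length <
      (p ⟨splitIdx u v π p + (b : ℕ), _⟩ : ℕ) - u.length
    omega
  · intro i
    have hi : splitIdx u v π p + (i : ℕ) < π.steps.length := by have := i.isLt; omega
    have hge : ¬ ((p ⟨splitIdx u v π p + (i : ℕ), hi⟩ : ℕ) < u.length) := by
      rw [splitIdx_key u v π p hocc]; simp
    have h2 := hocc.2 ⟨splitIdx u v π p + (i : ℕ), hi⟩
    simp only [List.get_eq_getElem] at h2 ⊢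
    rw [List.getElem_append_right (by omega)] at h2
    rw [steps_drop_get π _ _ i.isLt hi]
    exact h2

theorem isOcc_pComb (α β : QPath n A) (hfac : IsFactorization π α β)
    (p : Fin α.steps.length → Fin u.length) (q : Fin β.steps.length → Fin v.length)
    (hp : IsOcc α u p) (hq : IsOcc β v q) :
    IsOcc π (u ++ v) (pComb u v π α β hfac p q) := by
  have hL := steps_len_eq π α β hfac
  constructor
  · intro a b hab
    rw [Fin.lt_def] at hab ⊢
    by_cases ha : (a : ℕ) < α.steps.length
    · by_cases hb : (b : ℕ) < α.steps.length
      · rw [pComb_val_lt u v π α β hfac p q a ha, pComb_val_lt u v π α β hfac p q b hb]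
        have h := hp.1 ⟨(a : ℕ), ha⟩ ⟨(b : ℕ), hb⟩ (by rw [Fin.lt_def]; exact hab)
        rw [Fin.lt_def] at h; exact h
      · rw [pComb_val_lt u v π α β hfac p q a ha,
          pComb_val_ge u v π α β hfac p q b hb (by have := b.isLt; omega)]
        have := (p ⟨(a : ℕ), ha⟩).isLt
        omega
    · have hb : ¬ (b : ℕ) < α.steps.length := by omega
      rw [pComb_val_ge u v π α β hfac p q a ha (by have := a.isLt; omega),
        pComb_val_ge u v π α β hfac p q b hb (by have := b.isLt; omega)]
      have h := hq.1 ⟨(a : ℕ) - α.steps.length, by have := a.isLt; omega⟩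
        ⟨(b : ℕ) - α.steps.length, by have := b.isLt; omega⟩
        (by rw [Fin.lt_def]; simp; omega)
      rw [Fin.lt_def] at h
      simp at h
      omega
  · intro i
    simp only [List.get_eq_getElem]
    by_cases h : (i : ℕ) < α.steps.length
    · rw [getElem_idx_congr (pComb_val_lt u v π α β hfac p q i h)]
      rw [List.getElem_append_left (p ⟨(i : ℕ), h⟩).isLt]
      have h2 := hp.2 ⟨(i : ℕ), h⟩
      simp only [List.get_eq_getElem] at h2
      rw [h2, steps_append_left π α β hfac _ i.isLt h]
    · have h3 : (i : ℕ) - α.steps.length < β.steps.length := by have := i.isLt; omega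
      rw [getElem_idx_congr (pComb_val_ge u v π α β hfac p q i h h3)]
      rw [List.getElem_append_right (by omega)]
      have h2 := hq.2 ⟨(i : ℕ) - α.steps.length, h3⟩
      simp only [List.get_eq_getElem] at h2
      rw [steps_append_right π α β hfac _ i.isLt h h3]
      rw [← h2]
      congr 1
      omega

end Occ
section Monomial
variable {n : ℕ} {A : Type*} (u v : List A) (π : QPath n A)

theorem splitIdx_pComb (α β : QPath n A) (hfac : IsFactorization π α β)
    (p : Fin α.steps.length → Fin u.length) (q : Fin β.steps.length → Fin v.length) :
    splitIdx u v π (pComb u v π α β hfac p q) = α.steps.length := by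
  classical
  have hL := steps_len_eq π α β hfac
  unfold splitIdx
  have hset : (Finset.univ.filter
        (fun i : Fin π.steps.length => ((pComb u v π α β hfac p q i : ℕ)) < u.length))
      = Finset.univ.filter (fun i : Fin π.steps.length => (i : ℕ) < α.steps.length) := by
    ext a
    simp only [Finset.mem_filter, Finset.mem_univ, true_and]
    by_cases h : (a : ℕ) < α.steps.length
    · simp only [h, iff_true]
      rw [pComb_val_lt u v π α β hfac p q a h]
      exact (p ⟨(a : ℕ), h⟩).isLt
    · simp only [h, iff_false, not_lt]
      rw [pComb_val_ge u v π α β hfac p q a h (by have := a.isLt; omega)]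
      omega
  rw [hset, card_filter_lt_fin _ _ (by omega)]

theorem occMonomial_split (S : Type*) [CommSemiring S] (α β : QPath n A)
    (hfac : IsFactorization π α β) (p : Fin α.steps.length → Fin u.length)
    (q : Fin β.steps.length → Fin v.length) :
    occMonomial S π (u ++ v) (pComb u v π α β hfac p q) =
      occMonomial S α u p * occMonomial S β v q := by
  classical
  have hL := steps_len_eq π α β hfac
  have hA := (fact_eq_take π α β hfac).1
  have hB := (fact_eq_take π α β hfac).2
  have hjle : α.steps.length ≤ π.steps.length := by omega
  have hvtxA : ∀ k, k ≤ α.steps.length → α.vtx k = π.vtx k := by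
    intro k hk
    rw [hA]; exact vtx_take π hk (by omega)
  have hvtxB : ∀ k, k ≤ π.steps.length - α.steps.length →
      β.vtx k = π.vtx (α.steps.length + k) := by
    intro k hk
    rw [hB]; exact vtx_drop π hjle hk
  set P := pComb u v π α β hfac p q with hPdef
  have hmain : occMonomial S π (u ++ v) P =
      ∏ i : Fin (u.length + v.length),
        (fun i : Fin (u ++ v).length =>
          if ∃ j', P j' = i then 1
          else MvPolynomial.X ((u ++ v).get i,
            π.vtx (Finset.univ.filter (fun j' => P j' < i)).card))
          (finCongr (List.length_append : (u ++ v).length = u.length + v.length).symm i) := by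
    exact Fintype.prod_equiv (finCongr (List.length_append : (u ++ v).length = u.length + v.length).symm) _ _ (fun x => rfl) |>.symm
  rw [hmain, Fin.prod_univ_add]
  congr 1
  · -- left part
    apply Finset.prod_congr rfl
    intro i _
    set I : Fin (u ++ v).length :=
      finCongr (List.length_append : (u ++ v).length = u.length + v.length).symm (Fin.castAdd v.length i) with hIdef
    have hIval : (I : ℕ) = (i : ℕ) := by simp [hIdef]
    apply if_congr
    · constructor
      · rintro ⟨j', hj'⟩
        have hval : (P j' : ℕ) = (i : ℕ) := by rw [hj', hIval]
        by_cases hjlt : (j' : ℕ) < α.steps.length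
        · refine ⟨⟨(j' : ℕ), hjlt⟩, Fin.ext ?_⟩
          rw [← hval, hPdef, pComb_val_lt u v π α β hfac p q j' hjlt]
        · rw [hPdef, pComb_val_ge u v π α β hfac p q j' hjlt (by have := j'.isLt; omega)] at hval
          have := i.isLt
          omega
      · rintro ⟨j0, hj0⟩
        refine ⟨⟨(j0 : ℕ), by have := j0.isLt; omega⟩, Fin.ext ?_⟩
        rw [hPdef, pComb_val_lt u v π α β hfac p q _ (by exact j0.isLt), hIval]
        rw [← hj0]
    · rfl
    · -- X equality
      have hcard : (Finset.univ.filter (fun j' => P j' < I)).card =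
          (Finset.univ.filter (fun j0 : Fin α.steps.length => p j0 < i)).card := by
        refine Finset.card_bij' (fun a ha => (⟨(a : ℕ), ?_⟩ : Fin α.steps.length))
          (fun b hb => (⟨(b : ℕ), by have := b.isLt; omega⟩ : Fin π.steps.length))
          ?_ ?_ ?_ ?_
        · simp only [Finset.mem_filter, Finset.mem_univ, true_and] at ha
          rw [Fin.lt_def, hIval] at ha
          by_contra hcon
          rw [hPdef, pComb_val_ge u v π α β hfac p q a hcon (by have := a.isLt; omega)] at ha
          have := i.isLt
          omega
        · intro a ha
          simp only [Finset.mem_filter, Finset.mem_univ, true_and] at ha ⊢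
          have halt : (a : ℕ) < α.steps.length := by
            rw [Fin.lt_def, hIval] at ha
            by_contra hcon
            rw [hPdef, pComb_val_ge u v π α β hfac p q a hcon (by have := a.isLt; omega)] at ha
            have := i.isLt
            omega
          rw [Fin.lt_def, hIval, hPdef, pComb_val_lt u v π α β hfac p q a halt] at ha
          rw [Fin.lt_def]
          exact ha
        · intro b hb
          simp only [Finset.mem_filter, Finset.mem_univ, true_and] at hb ⊢
          rw [Fin.lt_def, hIval, hPdef,
            pComb_val_lt u v π α β hfac p q _ (by exact b.isLt)]
          rw [Fin.lt_def] at hb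
          exact hb
        · intro a ha; exact Fin.ext rfl
        · intro b hb; exact Fin.ext rfl
      have hget : (u ++ v).get I = u.get i := by
        simp only [List.get_eq_getElem]
        rw [getElem_idx_congr hIval, List.getElem_append_left i.isLt]
      rw [hget, hcard, hvtxA _ ((Finset.card_filter_le _ _).trans (by simp))]
  · -- right part
    apply Finset.prod_congr rfl
    intro i _
    set I : Fin (u ++ v).length :=
      finCongr (List.length_append : (u ++ v).length = u.length + v.length).symm (Fin.natAdd u.length i) with hIdef
    have hIval : (I : ℕ) = u.length + (i : ℕ) := by simp [hIdef]
    apply if_congr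
    · constructor
      · rintro ⟨j', hj'⟩
        have hval : (P j' : ℕ) = u.length + (i : ℕ) := by rw [hj', hIval]
        by_cases hjlt : (j' : ℕ) < α.steps.length
        · rw [hPdef, pComb_val_lt u v π α β hfac p q j' hjlt] at hval
          have := (p ⟨(j' : ℕ), hjlt⟩).isLt
          omega
        · have h3 : (j' : ℕ) - α.steps.length < β.steps.length := by have := j'.isLt; omega
          refine ⟨⟨(j' : ℕ) - α.steps.length, h3⟩, Fin.ext ?_⟩
          rw [hPdef, pComb_val_ge u v π α β hfac p q j' hjlt h3] at hval
          omega
      · rintro ⟨j0, hj0⟩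
        have hjlt : ¬ (α.steps.length + (j0 : ℕ) < α.steps.length) := by omega
        have pf : α.steps.length + (j0 : ℕ) < π.steps.length := by have := j0.isLt; omega
        have pf2 : α.steps.length + (j0 : ℕ) - α.steps.length < β.steps.length := by
          have := j0.isLt; omega
        have h1 := pComb_val_ge u v π α β hfac p q ⟨α.steps.length + (j0 : ℕ), pf⟩ hjlt pf2
        have h2 : (⟨α.steps.length + (j0 : ℕ) - α.steps.length, pf2⟩ : Fin β.steps.length) = j0 :=
          Fin.ext (by simp)
        rw [h2, ← hPdef] at h1
        have h3 : (q j0 : ℕ) = (i : ℕ) := congrArg Fin.val hj0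
        exact ⟨⟨α.steps.length + (j0 : ℕ), pf⟩, Fin.ext (by rw [hIval]; omega)⟩
    · rfl
    · have hcard : (Finset.univ.filter (fun j' => P j' < I)).card =
          α.steps.length +
            (Finset.univ.filter (fun j0 : Fin β.steps.length => q j0 < i)).card := by
        have hsplit : Finset.univ.filter (fun j' => P j' < I) =
            (Finset.univ.filter (fun j' : Fin π.steps.length => (j' : ℕ) < α.steps.length)) ∪
            (Finset.univ.filter (fun j' : Fin π.steps.length =>
              α.steps.length ≤ (j' : ℕ) ∧ P j' < I)) := by
          ext a
          simp only [Finset.mem_filter, Finset.mem_univ, true_and, Finset.mem_union]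
          constructor
          · intro h
            by_cases ha : (a : ℕ) < α.steps.length
            · exact Or.inl ha
            · exact Or.inr ⟨by omega, h⟩
          · rintro (h | ⟨h1, h2⟩)
            · rw [Fin.lt_def, hIval, hPdef, pComb_val_lt u v π α β hfac p q a h]
              have := (p ⟨(a : ℕ), h⟩).isLt
              omega
            · exact h2
        have hdisj : Disjoint
            (Finset.univ.filter (fun j' : Fin π.steps.length => (j' : ℕ) < α.steps.length))
            (Finset.univ.filter (fun j' : Fin π.steps.length =>
              α.steps.length ≤ (j' : ℕ) ∧ P j' < I)) := by
          rw [Finset.disjoint_left]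
          intro a ha hb
          simp only [Finset.mem_filter, Finset.mem_univ, true_and] at ha hb
          omega
        rw [hsplit, Finset.card_union_of_disjoint hdisj, card_filter_lt_fin _ _ hjle]
        congr 1
        have hmap2 : ∀ b : Fin β.steps.length, α.steps.length + (b : ℕ) < π.steps.length :=
          fun b => by have := b.isLt; omega
        have hinj : Function.Injective
            (fun b : Fin β.steps.length => (⟨α.steps.length + (b : ℕ), hmap2 b⟩ : Fin π.steps.length)) := by
          intro x y hxy
          apply Fin.ext
          have hv := congrArg Fin.val hxy
          simp only [Fin.val_mk] at hv
          omega
        have himg : (Finset.univ.filter (fun j' : Fin π.steps.length =>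
              α.steps.length ≤ (j' : ℕ) ∧ P j' < I)) =
            (Finset.univ.filter (fun j0 : Fin β.steps.length => q j0 < i)).map
              ⟨fun b => ⟨α.steps.length + (b : ℕ), hmap2 b⟩, hinj⟩ := by
          ext a
          simp only [Finset.mem_filter, Finset.mem_univ, true_and, Finset.mem_map,
            Function.Embedding.coeFn_mk]
          constructor
          · rintro ⟨h1, h2⟩
            have h3 : (a : ℕ) - α.steps.length < β.steps.length := by have := a.isLt; omega
            refine ⟨⟨(a : ℕ) - α.steps.length, h3⟩, ?_, Fin.ext (by simp; omega)⟩
            rw [Fin.lt_def, hIval, hPdef, pComb_val_ge u v π α β hfac p q a (by omega) h3] at h2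
            rw [Fin.lt_def]
            omega
          · rintro ⟨b, hb, rfl⟩
            refine ⟨by simp, ?_⟩
            have hb1 : ¬ (α.steps.length + (b : ℕ) < α.steps.length) := by omega
            have hb2 : α.steps.length + (b : ℕ) - α.steps.length < β.steps.length := by
              have := b.isLt; omega
            have h1 := pComb_val_ge u v π α β hfac p q ⟨α.steps.length + (b : ℕ), hmap2 b⟩
              hb1 hb2
            have h2 : (⟨α.steps.length + (b : ℕ) - α.steps.length, by have := b.isLt; omega⟩ :
                Fin β.steps.length) = b := Fin.ext (by simp)
            rw [h2, ← hPdef] at h1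
            rw [Fin.lt_def, hIval, h1]
            rw [Fin.lt_def] at hb
            omega
        rw [himg, Finset.card_map]
      have hget : (u ++ v).get I = v.get i := by
        simp only [List.get_eq_getElem]
        rw [getElem_idx_congr hIval, List.getElem_append_right (by omega)]
        exact getElem_idx_congr (by omega) _
      rw [hget, hcard, ← hvtxB _ ((Finset.card_filter_le _ _).trans (by simp; omega))]

end Monomial
theorem subtype_sigma_ext {n : ℕ} {A : Type*} {u v : List A}
    {C : (Σ (α : QPath n A) (β : QPath n A),
      (Fin α.steps.length → Fin u.length) × (Fin β.steps.length → Fin v.length)) → Prop}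
    {α α' β β' : QPath n A}
    {p : Fin α.steps.length → Fin u.length} {p' : Fin α'.steps.length → Fin u.length}
    {q : Fin β.steps.length → Fin v.length} {q' : Fin β'.steps.length → Fin v.length}
    (hα : α = α') (hβ : β = β')
    (hp : ∀ (i : ℕ) (h : i < α.steps.length) (h' : i < α'.steps.length),
      ((p ⟨i, h⟩ : ℕ)) = (p' ⟨i, h'⟩ : ℕ))
    (hq : ∀ (i : ℕ) (h : i < β.steps.length) (h' : i < β'.steps.length),
      ((q ⟨i, h⟩ : ℕ)) = (q' ⟨i, h'⟩ : ℕ))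
    {hx : C ⟨α, β, (p, q)⟩} {hx' : C ⟨α', β', (p', q')⟩} :
    (⟨⟨α, β, (p, q)⟩, hx⟩ : {x // C x}) = ⟨⟨α', β', (p', q')⟩, hx'⟩ := by
  subst hα hβ
  have hp2 : p = p' := funext fun i => Fin.ext (hp i i.isLt i.isLt)
  have hq2 : q = q' := funext fun i => Fin.ext (hq i i.isLt i.isLt)
  subst hp2 hq2
  rfl

theorem occurrence_splitting_bijection {S : Type*} [CommSemiring S] [Nontrivial S]
    {n : ℕ} (hn : 1 ≤ n) {A : Type*} (u v : List A) (π : QPath n A)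
    (m : MvPolynomial (A × Fin n) S)
    (hm : ∃ (d : (A × Fin n) →₀ ℕ) (c : S), m = MvPolynomial.monomial d c) :
    Nonempty (
      {p : Fin π.steps.length → Fin (u ++ v).length //
          IsOcc π (u ++ v) p ∧ occMonomial S π (u ++ v) p = m} ≃
      {x : Σ (α : QPath n A) (β : QPath n A),
            (Fin α.steps.length → Fin u.length) × (Fin β.steps.length → Fin v.length) //
          IsFactorization π x.1 x.2.1 ∧ IsOcc x.1 u x.2.2.1 ∧ IsOcc x.2.1 v x.2.2.2 ∧
            occMonomial S x.1 u x.2.2.1 * occMonomial S x.2.1 v x.2.2.2 = m}) := by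
  classical
  constructor
  refine
    { toFun := fun x =>
        ⟨⟨π.take (splitIdx u v π x.1), π.drop (splitIdx u v π x.1),
          (pL u v π x.1 x.2.1, pR u v π x.1 x.2.1)⟩,
          fact_take_drop π _ (splitIdx_le u v π x.1),
          isOcc_pL u v π x.1 x.2.1, isOcc_pR u v π x.1 x.2.1, ?_⟩,
      invFun := fun y =>
        ⟨pComb u v π y.1.1 y.1.2.1 y.2.1 y.1.2.2.1 y.1.2.2.2,
          isOcc_pComb u v π y.1.1 y.1.2.1 y.2.1 y.1.2.2.1 y.1.2.2.2 y.2.2.1 y.2.2.2.1,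
          (occMonomial_split u v π S y.1.1 y.1.2.1 y.2.1 y.1.2.2.1 y.1.2.2.2).trans
            y.2.2.2.2⟩,
      left_inv := ?_,
      right_inv := ?_ }
  · -- monomial condition for toFun
    have h := occMonomial_split u v π S (π.take (splitIdx u v π x.1))
      (π.drop (splitIdx u v π x.1)) (fact_take_drop π _ (splitIdx_le u v π x.1))
      (pL u v π x.1 x.2.1) (pR u v π x.1 x.2.1)
    rw [pComb_pL_pR u v π x.1 x.2.1 (fact_take_drop π _ (splitIdx_le u v π x.1))] at h
    exact h.symm.trans x.2.2
  · -- left inverse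
    intro x
    exact Subtype.ext (pComb_pL_pR u v π x.1 x.2.1 (fact_take_drop π _ (splitIdx_le u v π x.1)))
  · -- right inverse
    intro y
    obtain ⟨⟨α, β, p, q⟩, hfac, hp, hq, hmon⟩ := y
    have hL := steps_len_eq π α β hfac
    have hsp := splitIdx_pComb u v π α β hfac p q
    apply subtype_sigma_ext
    · rw [hsp]; exact ((fact_eq_take π α β hfac).1).symm
    · rw [hsp]; exact ((fact_eq_take π α β hfac).2).symm
    · intro i h h'
      show (pComb u v π α β hfac p q ⟨i, by omega⟩ : ℕ) = (p ⟨i, h'⟩ : ℕ)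
      exact pComb_val_lt u v π α β hfac p q _ h'
    · intro i h h'
      have hi : splitIdx u v π (pComb u v π α β hfac p q) + i < π.steps.length := by omega
      show (pComb u v π α β hfac p q
        ⟨splitIdx u v π (pComb u v π α β hfac p q) + i, hi⟩ : ℕ) - u.length = (q ⟨i, h'⟩ : ℕ)
      have hnotlt : ¬ (splitIdx u v π (pComb u v π α β hfac p q) + i < α.steps.length) := by
        omega
      have hsub : splitIdx u v π (pComb u v π α β hfac p q) + i - α.steps.length <
          β.steps.length := by omega
      have hge := pComb_val_ge u v π α β hfac p q
        ⟨splitIdx u v π (pComb u v π α β hfac p q) + i, hi⟩ hnotlt hsub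
      have hidx : (⟨splitIdx u v π (pComb u v π α β hfac p q) + i - α.steps.length, hsub⟩ :
          Fin β.steps.length) = ⟨i, h'⟩ := Fin.ext (by simp; omega)
      rw [hidx] at hge
      omega
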